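/- Let A ∈ ℝ^{m×n}, let Ḡ ∈ ℝ^{m×k} and H̄ ∈ ℝ^{n×ℓ} be full-column-rank matrices, set A_x = H̄⁺AᵀḠ and A_y = Ḡ⁺AH̄, and let U_G and U_H be matrices whose columns are orthonormal bases of the column spaces of Ḡ and H̄ respectively. Then the spectral radius of A_y A_x satisfies ρ(A_y A_x) = ‖U_Gᵀ A U_H‖², where ‖·‖ is the spectral norm. -/

import Mathlib

open Matrix

/-- Euclidean norm of a vector in `ℝ^n`. -/
noncomputable def vnorm {n : ℕ} (v : Fin n → ℝ) : ℝ := Real.sqrt (v ⬝ᵥ v)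

/-- Spectral norm of a real matrix: the largest value of `‖Av‖` over the unit ball. -/
noncomputable def specNorm {m n : ℕ} (A : Matrix (Fin m) (Fin n) ℝ) : ℝ :=
  sSup {r : ℝ | ∃ v : Fin n → ℝ, vnorm v ≤ 1 ∧ r = vnorm (A.mulVec v)}

/-- Pseudoinverse of a full-column-rank matrix: `N⁺ = (NᵀN)⁻¹Nᵀ`. -/
noncomputable def pinv {α β : Type*} [Fintype α] [Fintype β] [DecidableEq β]
    (N : Matrix α β ℝ) : Matrix β α ℝ :=
  (Nᵀ * N)⁻¹ * Nᵀ

/-- Spectral radius of a real square matrix: the largest modulus of its (complex)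
eigenvalues. -/
noncomputable def specRad {α : Type*} [Fintype α] [DecidableEq α]
    (C : Matrix α α ℝ) : ℝ :=
  sSup {r : ℝ | ∃ μ : ℂ, μ ∈ spectrum ℂ (C.map Complex.ofReal) ∧ r = ‖μ‖}


open scoped Matrix.Norms.L2Operator

noncomputable instance myCStar {k : ℕ} : CStarAlgebra (Matrix (Fin k) (Fin k) ℂ) := ⟨⟩

lemma vnorm_eq {q : ℕ} (v : Fin q → ℝ) :
    vnorm v = ‖(WithLp.equiv 2 (Fin q → ℝ)).symm v‖ := by
  rw [EuclideanSpace.norm_eq]; unfold vnorm; congr 1; simp [dotProduct, sq]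

lemma l2norm_le {𝕜 : Type*} [RCLike 𝕜] {p q : ℕ} (A : Matrix (Fin p) (Fin q) 𝕜) {c : ℝ}
    (hc : 0 ≤ c)
    (h : ∀ v : EuclideanSpace 𝕜 (Fin q),
      ‖(WithLp.equiv 2 (Fin p → 𝕜)).symm (A *ᵥ (WithLp.equiv 2 (Fin q → 𝕜)) v)‖ ≤ c * ‖v‖) :
    ‖A‖ ≤ c := by
  rw [Matrix.l2_opNorm_def]
  refine ContinuousLinearMap.opNorm_le_bound _ hc fun v => ?_
  simpa [LinearEquiv.trans_apply, Matrix.toEuclideanLin_apply] using h v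

lemma l2norm_mulVec {𝕜 : Type*} [RCLike 𝕜] {p q : ℕ} (A : Matrix (Fin p) (Fin q) 𝕜)
    (v : EuclideanSpace 𝕜 (Fin q)) :
    ‖(WithLp.equiv 2 (Fin p → 𝕜)).symm (A *ᵥ (WithLp.equiv 2 (Fin q → 𝕜)) v)‖ ≤ ‖A‖ * ‖v‖ :=
  A.l2_opNorm_mulVec v

lemma cnorm_sq {p : ℕ} (u : Fin p → ℂ) :
    ‖(WithLp.equiv 2 (Fin p → ℂ)).symm u‖ ^ 2 = ∑ j, ((u j).re ^ 2 + (u j).im ^ 2) := by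
  rw [EuclideanSpace.norm_eq, Real.sq_sqrt (by positivity)]
  congr 1; ext j
  simp [WithLp.equiv_symm_apply, PiLp.toLp_apply, Complex.sq_norm,
    Complex.normSq_apply, sq]
  rw [← Complex.normSq_apply, Complex.normSq_eq_norm_sq, sq]

lemma rnorm_sq {p : ℕ} (u : Fin p → ℝ) :
    ‖(WithLp.equiv 2 (Fin p → ℝ)).symm u‖ ^ 2 = ∑ j, (u j) ^ 2 := by
  rw [EuclideanSpace.norm_eq, Real.sq_sqrt (by positivity)]
  congr 1; ext j
  simp [WithLp.equiv_symm_apply, PiLp.toLp_apply, Real.norm_eq_abs, sq_abs]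

lemma specNorm_eq_l2norm {p q : ℕ} (B : Matrix (Fin p) (Fin q) ℝ) : specNorm B = ‖B‖ := by
  rw [Matrix.l2_opNorm_def, ← ContinuousLinearMap.sSup_unitClosedBall_eq_norm]
  unfold specNorm
  congr 1
  ext r
  simp only [Set.mem_setOf_eq, Set.mem_image, Metric.mem_closedBall, dist_zero_right,
    LinearEquiv.trans_apply, LinearMap.coe_toContinuousLinearMap]
  constructor
  · rintro ⟨v, hv1, rfl⟩
    refine ⟨(WithLp.equiv 2 (Fin q → ℝ)).symm v, by rwa [vnorm_eq] at hv1, ?_⟩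
    simp [LinearMap.coe_toContinuousLinearMap', Matrix.toEuclideanLin_apply, vnorm_eq]
  · rintro ⟨x, hx, rfl⟩
    refine ⟨(WithLp.equiv 2 (Fin q → ℝ)) x, by rwa [vnorm_eq], ?_⟩
    simp [LinearMap.coe_toContinuousLinearMap', Matrix.toEuclideanLin_apply, vnorm_eq]

lemma l2norm_map_ofReal {p q : ℕ} (B : Matrix (Fin p) (Fin q) ℝ) :
    ‖B.map Complex.ofReal‖ = ‖B‖ := by
  set Bc := B.map Complex.ofReal with hBc
  apply le_antisymm
  · refine l2norm_le Bc (norm_nonneg B) fun v => ?_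
    set vv := (WithLp.equiv 2 (Fin q → ℂ)) v with hvv
    set x : Fin q → ℝ := fun i => (vv i).re with hx
    set y : Fin q → ℝ := fun i => (vv i).im with hy
    have hre : ∀ j, ((Bc *ᵥ vv) j).re = (B *ᵥ x) j := by
      intro j
      simp [hBc, hx, Matrix.mulVec, dotProduct, Complex.re_sum]
    have him : ∀ j, ((Bc *ᵥ vv) j).im = (B *ᵥ y) j := by
      intro j
      simp [hBc, hy, Matrix.mulVec, dotProduct, Complex.im_sum]
    have hxe := l2norm_mulVec B ((WithLp.equiv 2 (Fin q → ℝ)).symm x)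
    have hye := l2norm_mulVec B ((WithLp.equiv 2 (Fin q → ℝ)).symm y)
    rw [Equiv.apply_symm_apply] at hxe hye
    have hsq : ‖(WithLp.equiv 2 (Fin p → ℂ)).symm (Bc *ᵥ vv)‖ ^ 2
        = ‖(WithLp.equiv 2 (Fin p → ℝ)).symm (B *ᵥ x)‖ ^ 2
          + ‖(WithLp.equiv 2 (Fin p → ℝ)).symm (B *ᵥ y)‖ ^ 2 := by
      rw [cnorm_sq, rnorm_sq, rnorm_sq, ← Finset.sum_add_distrib]
      congr 1; ext j; rw [hre, him]
    have hv : ‖v‖ ^ 2 = ‖(WithLp.equiv 2 (Fin q → ℝ)).symm x‖ ^ 2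
        + ‖(WithLp.equiv 2 (Fin q → ℝ)).symm y‖ ^ 2 := by
      have : v = (WithLp.equiv 2 (Fin q → ℂ)).symm vv := by rw [hvv]; simp
      rw [this, cnorm_sq, rnorm_sq, rnorm_sq, ← Finset.sum_add_distrib]
    have key : ‖(WithLp.equiv 2 (Fin p → ℂ)).symm (Bc *ᵥ vv)‖ ^ 2 ≤ (‖B‖ * ‖v‖) ^ 2 := by
      rw [hsq]
      have h1 : ‖(WithLp.equiv 2 (Fin p → ℝ)).symm (B *ᵥ x)‖ ^ 2
          ≤ (‖B‖ * ‖(WithLp.equiv 2 (Fin q → ℝ)).symm x‖) ^ 2 :=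
        pow_le_pow_left₀ (norm_nonneg _) hxe 2
      have h2 : ‖(WithLp.equiv 2 (Fin p → ℝ)).symm (B *ᵥ y)‖ ^ 2
          ≤ (‖B‖ * ‖(WithLp.equiv 2 (Fin q → ℝ)).symm y‖) ^ 2 :=
        pow_le_pow_left₀ (norm_nonneg _) hye 2
      calc _ ≤ (‖B‖ * ‖(WithLp.equiv 2 (Fin q → ℝ)).symm x‖) ^ 2
            + (‖B‖ * ‖(WithLp.equiv 2 (Fin q → ℝ)).symm y‖) ^ 2 := add_le_add h1 h2
        _ = (‖B‖ * ‖v‖) ^ 2 := by rw [mul_pow, mul_pow, mul_pow, hv]; ring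
    have h0 : (0:ℝ) ≤ ‖B‖ * ‖v‖ := by positivity
    calc ‖(WithLp.equiv 2 (Fin p → ℂ)).symm (Bc *ᵥ vv)‖
        = Real.sqrt (‖(WithLp.equiv 2 (Fin p → ℂ)).symm (Bc *ᵥ vv)‖ ^ 2) :=
          (Real.sqrt_sq (norm_nonneg _)).symm
      _ ≤ Real.sqrt ((‖B‖ * ‖v‖) ^ 2) := Real.sqrt_le_sqrt key
      _ = ‖B‖ * ‖v‖ := Real.sqrt_sq h0
  · refine l2norm_le B (norm_nonneg Bc) fun v => ?_
    set vv := (WithLp.equiv 2 (Fin q → ℝ)) v with hvv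
    set vc : Fin q → ℂ := fun i => (vv i : ℂ) with hvc
    have hmv : ∀ j, (Bc *ᵥ vc) j = ((B *ᵥ vv) j : ℂ) := by
      intro j
      simp [hBc, hvc, Matrix.mulVec, dotProduct]
    have h1 : ‖(WithLp.equiv 2 (Fin p → ℝ)).symm (B *ᵥ vv)‖
        = ‖(WithLp.equiv 2 (Fin p → ℂ)).symm (Bc *ᵥ vc)‖ := by
      have e1 := rnorm_sq (B *ᵥ vv)
      have e2 := cnorm_sq (Bc *ᵥ vc)
      have : ‖(WithLp.equiv 2 (Fin p → ℝ)).symm (B *ᵥ vv)‖ ^ 2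
          = ‖(WithLp.equiv 2 (Fin p → ℂ)).symm (Bc *ᵥ vc)‖ ^ 2 := by
        rw [e1, e2]; congr 1; ext j; rw [hmv]; simp
      have := congrArg Real.sqrt this
      rwa [Real.sqrt_sq (norm_nonneg _), Real.sqrt_sq (norm_nonneg _)] at this
    have h2 : ‖v‖ = ‖(WithLp.equiv 2 (Fin q → ℂ)).symm vc‖ := by
      have : ‖v‖ ^ 2 = ‖(WithLp.equiv 2 (Fin q → ℂ)).symm vc‖ ^ 2 := by
        have : v = (WithLp.equiv 2 (Fin q → ℝ)).symm vv := by rw [hvv]; simp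
        rw [this, rnorm_sq, cnorm_sq]
        congr 1; ext j; simp [hvc]
      have := congrArg Real.sqrt this
      rwa [Real.sqrt_sq (norm_nonneg _), Real.sqrt_sq (norm_nonneg _)] at this
    rw [h1, h2]
    have := l2norm_mulVec Bc ((WithLp.equiv 2 (Fin q → ℂ)).symm vc)
    rwa [Equiv.apply_symm_apply] at this

lemma specNorm_of_target_zero {l : ℕ} (B : Matrix (Fin 0) (Fin l) ℝ) : specNorm B = 0 := by
  unfold specNorm
  have : {r : ℝ | ∃ v : Fin l → ℝ, vnorm v ≤ 1 ∧ r = vnorm (B.mulVec v)} = {0} := by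
    ext r
    simp only [Set.mem_setOf_eq, Set.mem_singleton_iff]
    constructor
    · rintro ⟨v, -, rfl⟩
      simp [vnorm, dotProduct]
    · rintro rfl
      exact ⟨0, by simp [vnorm, dotProduct], by simp [vnorm, dotProduct]⟩
  rw [this, csSup_singleton]

lemma specRad_mul_transpose {k l : ℕ} (B : Matrix (Fin k) (Fin l) ℝ) :
    specRad (B * Bᵀ) = specNorm B ^ 2 := by
  rcases Nat.eq_zero_or_pos k with hk | hk
  · subst hk
    unfold specRad
    have hspec : spectrum ℂ ((B * Bᵀ).map Complex.ofReal) = ∅ := by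
      ext μ
      simp only [spectrum.mem_iff, Set.mem_empty_iff_false, iff_false, not_not]
      exact isUnit_of_subsingleton _
    rw [hspec]
    simp only [Set.mem_empty_iff_false, false_and, exists_false]
    rw [show {r : ℝ | False} = ∅ by ext; simp, Real.sSup_empty,
      specNorm_of_target_zero]
    norm_num
  · haveI : Nonempty (Fin k) := ⟨⟨0, hk⟩⟩
    set Bc := B.map Complex.ofReal with hBc
    have hBt : Bᵀ.map Complex.ofReal = Bcᴴ := by
      ext i j
      simp [hBc, conjTranspose_apply, Matrix.transpose_apply, Complex.conj_ofReal]
    have hMc : (B * Bᵀ).map Complex.ofReal = Bc * Bcᴴ := by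
      rw [show ((Complex.ofReal : ℝ → ℂ) = ⇑(Complex.ofRealHom)) from rfl, Matrix.map_mul]
      rw [← hBt]
      rfl
    set Mc := Bc * Bcᴴ with hMcdef
    have hsr := @IsSelfAdjoint.spectralRadius_eq_nnnorm _ myCStar Mc (by
      show star Mc = Mc
      rw [Matrix.star_eq_conjTranspose, hMcdef, conjTranspose_mul,
        conjTranspose_conjTranspose])
    have h2 := @spectrum.nonempty (Matrix (Fin k) (Fin k) ℂ) _ _ _ _ Mc
    obtain ⟨μ₀, hμ₀mem, hμ₀⟩ :=
      spectrum.exists_nnnorm_eq_spectralRadius_of_nonempty (𝕜 := ℂ) h2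
    have hμ₀n : ‖μ₀‖ = ‖Mc‖ := by
      exact_mod_cast congrArg ENNReal.toReal (hμ₀.trans hsr)
    unfold specRad
    rw [hMc]
    have hgoal : sSup {r : ℝ | ∃ μ : ℂ, μ ∈ spectrum ℂ Mc ∧ r = ‖μ‖} = ‖Mc‖ := by
      refine IsGreatest.csSup_eq ⟨⟨μ₀, ?_, by rw [← hμ₀n]⟩, ?_⟩
      · exact hμ₀mem
      · rintro r ⟨μ, hμ, rfl⟩
        exact spectrum.norm_le_norm_of_mem hμ
    rw [hgoal]
    have h1 : ‖Mc‖ = ‖Bc‖ * ‖Bc‖ := by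
      have := Matrix.l2_opNorm_conjTranspose_mul_self Bcᴴ
      rwa [conjTranspose_conjTranspose, Matrix.l2_opNorm_conjTranspose] at this
    rw [h1, specNorm_eq_l2norm, ← l2norm_map_ofReal, sq, hBc]

lemma eq_of_mulVec_eq {p q : ℕ} {M N : Matrix (Fin p) (Fin q) ℝ}
    (h : ∀ v, M *ᵥ v = N *ᵥ v) : M = N := by
  have : Matrix.toLin' M = Matrix.toLin' N :=
    LinearMap.ext fun v => by simpa [Matrix.toLin'_apply] using h v
  exact Matrix.toLin'.injective this

lemma factor_col {m k : ℕ} {Gb UG : Matrix (Fin m) (Fin k) ℝ}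
    (hUGo : UGᵀ * UG = 1)
    (hspan : LinearMap.range UG.mulVecLin = LinearMap.range Gb.mulVecLin) :
    UG * (UGᵀ * Gb) = Gb := by
  apply eq_of_mulVec_eq
  intro v
  have hv : Gb *ᵥ v ∈ LinearMap.range UG.mulVecLin := by
    rw [hspan]; exact ⟨v, rfl⟩
  obtain ⟨w, hw⟩ := hv
  have hw' : UG *ᵥ w = Gb *ᵥ v := hw
  calc (UG * (UGᵀ * Gb)) *ᵥ v = UG *ᵥ (UGᵀ *ᵥ (Gb *ᵥ v)) := by
        rw [Matrix.mulVec_mulVec, Matrix.mulVec_mulVec, Matrix.mul_assoc]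
    _ = UG *ᵥ (UGᵀ *ᵥ (UG *ᵥ w)) := by rw [hw']
    _ = (UG * (UGᵀ * UG)) *ᵥ w := by
        rw [Matrix.mulVec_mulVec, Matrix.mulVec_mulVec, Matrix.mul_assoc]
    _ = UG *ᵥ w := by rw [hUGo, Matrix.mul_one]
    _ = Gb *ᵥ v := hw'

lemma isUnit_of_rank_eq {p : ℕ} {R : Matrix (Fin p) (Fin p) ℝ} (h : R.rank = p) :
    IsUnit R := by
  have hrange : LinearMap.range R.mulVecLin = ⊤ := by
    apply Submodule.eq_top_of_finrank_eq
    rw [show Module.finrank ℝ (Fin p → ℝ) = p by simp]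
    exact h
  obtain ⟨g, hg⟩ := LinearMap.exists_rightInverse_of_surjective R.mulVecLin hrange
  set B := LinearMap.toMatrix' g with hB
  have hRB : R * B = 1 := by
    apply Matrix.toLin'.injective
    rw [Matrix.toLin'_mul, Matrix.toLin'_one]
    have h1 : Matrix.toLin' R = R.mulVecLin := rfl
    have h2 : Matrix.toLin' B = g := Matrix.toLin'_toMatrix' g
    rw [h1, h2]
    exact hg
  exact ⟨⟨R, B, hRB, mul_eq_one_comm.mp hRB⟩, rfl⟩

lemma pinv_factor {m k : ℕ} (UG : Matrix (Fin m) (Fin k) ℝ) (R : Matrix (Fin k) (Fin k) ℝ)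
    (hUGo : UGᵀ * UG = 1) (hR : IsUnit R) : pinv (UG * R) = R⁻¹ * UGᵀ := by
  have hdet : IsUnit R.det := (Matrix.isUnit_iff_isUnit_det R).mp hR
  have hdetT : IsUnit Rᵀ.det := by rwa [Matrix.det_transpose]
  unfold pinv
  rw [Matrix.transpose_mul]
  have h1 : Rᵀ * UGᵀ * (UG * R) = Rᵀ * R := by
    rw [Matrix.mul_assoc, ← Matrix.mul_assoc UGᵀ, hUGo, Matrix.one_mul]
  rw [h1, Matrix.mul_inv_rev]
  rw [Matrix.mul_assoc, ← Matrix.mul_assoc Rᵀ⁻¹, Matrix.nonsing_inv_mul Rᵀ hdetT,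
    Matrix.one_mul]

lemma specRad_conj {k : ℕ} (M P Q : Matrix (Fin k) (Fin k) ℝ)
    (hPQ : P * Q = 1) (hQP : Q * P = 1) :
    specRad (P * M * Q) = specRad M := by
  unfold specRad
  have hofReal : (Complex.ofReal : ℝ → ℂ) = ⇑Complex.ofRealHom := rfl
  have hmap : ∀ X Y : Matrix (Fin k) (Fin k) ℝ,
      (X * Y).map Complex.ofReal = X.map Complex.ofReal * Y.map Complex.ofReal := by
    intro X Y; rw [hofReal, Matrix.map_mul]
  have hone : (1 : Matrix (Fin k) (Fin k) ℝ).map Complex.ofReal = 1 :=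
    Matrix.map_one _ Complex.ofReal_zero Complex.ofReal_one
  set u : (Matrix (Fin k) (Fin k) ℂ)ˣ :=
    ⟨Q.map Complex.ofReal, P.map Complex.ofReal,
      by rw [← hmap, hQP, hone], by rw [← hmap, hPQ, hone]⟩ with hu
  have hspec : spectrum ℂ ((P * M * Q).map Complex.ofReal)
      = spectrum ℂ (M.map Complex.ofReal) := by
    have : (P * M * Q).map Complex.ofReal
        = (↑u⁻¹ : Matrix (Fin k) (Fin k) ℂ) * M.map Complex.ofReal
          * (↑u : Matrix (Fin k) (Fin k) ℂ) := by
      rw [hmap, hmap]; rfl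
    rw [this, spectrum.units_conjugate']
  simp only [hspec]

/-- With `A_x = H̄⁺AᵀḠ`, `A_y = Ḡ⁺AH̄` for full-column-rank `Ḡ`, `H̄`, and `U_G`, `U_H`
orthonormal bases of the column spaces of `Ḡ`, `H̄`, one has
`ρ(A_y A_x) = ‖U_Gᵀ A U_H‖²`. -/
theorem stmt11 {m n k l : ℕ} (A : Matrix (Fin m) (Fin n) ℝ)
    (Gb : Matrix (Fin m) (Fin k) ℝ) (Hb : Matrix (Fin n) (Fin l) ℝ)
    (hGrank : Gb.rank = k) (hHrank : Hb.rank = l)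
    (UG : Matrix (Fin m) (Fin k) ℝ) (UH : Matrix (Fin n) (Fin l) ℝ)
    (hUGo : UGᵀ * UG = 1) (hUHo : UHᵀ * UH = 1)
    (hUGspan : LinearMap.range UG.mulVecLin = LinearMap.range Gb.mulVecLin)
    (hUHspan : LinearMap.range UH.mulVecLin = LinearMap.range Hb.mulVecLin) :
    specRad (pinv Gb * A * Hb * (pinv Hb * Aᵀ * Gb)) = specNorm (UGᵀ * A * UH) ^ 2 := by
  set R := UGᵀ * Gb with hR
  set S := UHᵀ * Hb with hS
  have hGfac : UG * R = Gb := by rw [hR]; exact factor_col hUGo hUGspan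
  have hHfac : UH * S = Hb := by rw [hS]; exact factor_col hUHo hUHspan
  have hRrank : R.rank = k := by
    refine le_antisymm (Matrix.rank_le_width R) ?_
    calc k = Gb.rank := hGrank.symm
      _ = (UG * R).rank := by rw [hGfac]
      _ ≤ R.rank := Matrix.rank_mul_le_right UG R
  have hSrank : S.rank = l := by
    refine le_antisymm (Matrix.rank_le_width S) ?_
    calc l = Hb.rank := hHrank.symm
      _ = (UH * S).rank := by rw [hHfac]
      _ ≤ S.rank := Matrix.rank_mul_le_right UH S
  have hRu : IsUnit R := isUnit_of_rank_eq hRrank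
  have hSu : IsUnit S := isUnit_of_rank_eq hSrank
  have hdetR := (Matrix.isUnit_iff_isUnit_det R).mp hRu
  have hdetS := (Matrix.isUnit_iff_isUnit_det S).mp hSu
  have hpg : pinv Gb = R⁻¹ * UGᵀ := by rw [← hGfac]; exact pinv_factor UG R hUGo hRu
  have hph : pinv Hb = S⁻¹ * UHᵀ := by rw [← hHfac]; exact pinv_factor UH S hUHo hSu
  have hBt : (UGᵀ * A * UH)ᵀ = UHᵀ * (Aᵀ * UG) := by
    rw [Matrix.transpose_mul, Matrix.transpose_mul, Matrix.transpose_transpose]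
  have hC : pinv Gb * A * Hb * (pinv Hb * Aᵀ * Gb)
      = R⁻¹ * ((UGᵀ * A * UH) * (UGᵀ * A * UH)ᵀ) * R := by
    rw [hBt, hpg, hph, ← hGfac, ← hHfac]
    have hSS : S * S⁻¹ = 1 := Matrix.mul_nonsing_inv S hdetS
    simp only [Matrix.mul_assoc]
    rw [← Matrix.mul_assoc S S⁻¹, hSS, Matrix.one_mul]
  rw [hC]
  have h1 : R⁻¹ * R = 1 := Matrix.nonsing_inv_mul R hdetR
  have h2 : R * R⁻¹ = 1 := Matrix.mul_nonsing_inv R hdetR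
  rw [specRad_conj ((UGᵀ * A * UH) * (UGᵀ * A * UH)ᵀ) R⁻¹ R h1 h2]
  exact specRad_mul_transpose (UGᵀ * A * UH)
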